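/- Let f and h be orientation-preserving piecewise linear homeomorphisms of the real line with hfh⁻¹ = f⁻¹ and f ≠ id. Then f has a fixed point and h has no fixed point. -/

import Mathlib

/-- A function `ℝ → ℝ` is piecewise linear: its set of break points is locally
finite, and off the break points the function is locally affine. -/
def IsPLFun (f : ℝ → ℝ) : Prop :=
  ∃ B : Set ℝ, (∀ r : ℝ, (B ∩ Set.Icc (-r) r).Finite) ∧
    ∀ x ∉ B, ∃ a b : ℝ, ∀ᶠ y in nhds x, f y = a * y + b

/-- An element of `PL⁺(ℝ)`: an increasing piecewise linear bijection of the line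
(such a map is automatically a homeomorphism of `ℝ`). -/
def PLplusR (f : ℝ → ℝ) : Prop :=
  Function.Bijective f ∧ StrictMono f ∧ IsPLFun f

lemma PLplusR.continuous {f : ℝ → ℝ} (hf : PLplusR f) : Continuous f := by
  obtain ⟨hbij, hmono, -⟩ := hf
  have h := (StrictMono.orderIsoOfSurjective f hmono hbij.2).continuous
  simpa using h

/-- uniqueness of local affine coefficients -/
lemma affine_germ_unique {f : ℝ → ℝ} {x a b a' b' : ℝ}
    (h1 : ∀ᶠ y in nhds x, f y = a * y + b)
    (h2 : ∀ᶠ y in nhds x, f y = a' * y + b') : a = a' ∧ b = b' := by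
  obtain ⟨δ, hδ, hball⟩ := Metric.eventually_nhds_iff.1 (h1.and h2)
  have hx : f x = a * x + b ∧ f x = a' * x + b' := hball (by simpa using hδ)
  have hx2 : f (x + δ / 2) = a * (x + δ / 2) + b ∧
      f (x + δ / 2) = a' * (x + δ / 2) + b' := by
    apply hball
    rw [Real.dist_eq]
    rw [show x + δ / 2 - x = δ / 2 by ring, abs_of_pos (by linarith)]
    linarith
  have e1 : a * x + b = a' * x + b' := hx.1.symm.trans hx.2
  have e2 : a * (x + δ / 2) + b = a' * (x + δ / 2) + b' := hx2.1.symm.trans hx2.2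
  have h5 : a * (δ / 2) = a' * (δ / 2) := by nlinarith [e1, e2]
  have ha : a = a' := mul_right_cancel₀ (by positivity) h5
  refine ⟨ha, ?_⟩
  rw [ha] at e1; linarith

/-- near any point there is a punctured neighbourhood free of break points -/
lemma no_break_near {B : Set ℝ} (hB : ∀ r : ℝ, (B ∩ Set.Icc (-r) r).Finite) (p : ℝ) :
    ∃ ε > 0, ∀ x, x ≠ p → |x - p| < ε → x ∉ B := by
  set r : ℝ := |p| + 1 with hr
  set S : Set ℝ := (B ∩ Set.Icc (-r) r) \ {p} with hS
  have hSfin : S.Finite := (hB r).diff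
  have hpS : p ∉ S := by simp [hS]
  obtain ⟨δ, hδ, hball⟩ := Metric.isOpen_iff.1 hSfin.isClosed.isOpen_compl p hpS
  refine ⟨min δ 1, lt_min hδ one_pos, ?_⟩
  intro x hxp hxd hxB
  have h1 : |x - p| < 1 := lt_of_lt_of_le hxd (min_le_right _ _)
  have h2 : |x| ≤ r := by
    have := abs_add_le (x - p) p
    rw [hr]
    have : |x| ≤ |x - p| + |p| := by
      calc |x| = |(x - p) + p| := by ring_nf
        _ ≤ |x - p| + |p| := abs_add_le _ _
    linarith
  have hxS : x ∈ S := ⟨⟨hxB, abs_le.1 h2⟩, hxp⟩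
  have hxball : x ∈ Metric.ball p δ := by
    rw [Metric.mem_ball, Real.dist_eq]
    exact lt_of_lt_of_le hxd (min_le_left _ _)
  exact hball hxball hxS

/-- on a break-free open interval the function is affine -/
lemma affine_on_Ioo {f : ℝ → ℝ} {B : Set ℝ}
    (haff : ∀ x ∉ B, ∃ a b : ℝ, ∀ᶠ y in nhds x, f y = a * y + b)
    {u v : ℝ} (huv : u < v) (hno : ∀ x ∈ Set.Ioo u v, x ∉ B) :
    ∃ a b : ℝ, ∀ x ∈ Set.Ioo u v, f x = a * x + b := by
  have hx₀ : (u + v) / 2 ∈ Set.Ioo u v := ⟨by linarith, by linarith⟩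
  obtain ⟨a, b, hab⟩ := haff _ (hno _ hx₀)
  refine ⟨a, b, ?_⟩
  have key : ∀ x ∈ Set.Ioo u v, ∀ᶠ y in nhds x, f y = a * y + b := by
    by_contra hcon
    push_neg at hcon
    obtain ⟨z, hz, hzn⟩ := hcon
    set U : Set ℝ := {x | ∀ᶠ y in nhds x, f y = a * y + b} with hU
    set V : Set ℝ := ⋃ (q : ℝ × ℝ) (_ : ¬(q.1 = a ∧ q.2 = b)),
      {x | ∀ᶠ y in nhds x, f y = q.1 * y + q.2} with hV
    have hUopen : IsOpen U := isOpen_setOf_eventually_nhds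
    have hVopen : IsOpen V :=
      isOpen_iUnion fun q => isOpen_iUnion fun _ => isOpen_setOf_eventually_nhds
    have hcover : Set.Ioo u v ⊆ U ∪ V := by
      intro x hx
      obtain ⟨a', b', h'⟩ := haff x (hno x hx)
      by_cases hq : a' = a ∧ b' = b
      · left; rw [hq.1, hq.2] at h'; exact h'
      · right; exact Set.mem_iUnion.2 ⟨(a', b'), Set.mem_iUnion.2 ⟨hq, h'⟩⟩
    have hUne : (Set.Ioo u v ∩ U).Nonempty := ⟨_, hx₀, hab⟩
    have hVne : (Set.Ioo u v ∩ V).Nonempty := by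
      refine ⟨z, hz, ?_⟩
      obtain ⟨a', b', h'⟩ := haff z (hno z hz)
      have hq : ¬(a' = a ∧ b' = b) := by
        intro hq; exact hzn (by rw [← hq.1, ← hq.2]; simpa using h')
      exact Set.mem_iUnion.2 ⟨(a', b'), Set.mem_iUnion.2 ⟨hq, h'⟩⟩
    obtain ⟨w, hwI, hwU, hwV⟩ :=
      isPreconnected_Ioo (a := u) (b := v) U V hUopen hVopen hcover hUne hVne
    obtain ⟨q, hq2⟩ := Set.mem_iUnion.1 hwV
    obtain ⟨hqne, hev⟩ := Set.mem_iUnion.1 hq2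
    exact hqne (affine_germ_unique hev hwU)
  intro x hx
  exact (key x hx).self_of_nhds

/-- right germ at a fixed point: `f (p + t) = p + a t` for small positive `t` -/
lemma right_germ {f : ℝ → ℝ} (hf : PLplusR f) {p : ℝ} (hp : f p = p) :
    ∃ ε > 0, ∃ a > 0, ∀ t : ℝ, 0 < t → t < ε → f (p + t) = p + a * t := by
  obtain ⟨hbij, hmono, B, hBfin, haff⟩ := hf
  obtain ⟨ε, hε, hB⟩ := no_break_near hBfin p
  have hno : ∀ x ∈ Set.Ioo p (p + ε), x ∉ B := by
    intro x hx
    refine hB x (ne_of_gt hx.1) ?_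
    rw [abs_of_pos (by linarith [hx.1])]
    linarith [hx.2]
  obtain ⟨a, b, hab⟩ := affine_on_Ioo haff (by linarith) hno
  have ha : 0 < a := by
    have h1 := hab (p + ε / 3) ⟨by linarith, by linarith⟩
    have h2 := hab (p + 2 * ε / 3) ⟨by linarith, by linarith⟩
    have h3 : f (p + ε / 3) < f (p + 2 * ε / 3) := hmono (by linarith)
    nlinarith
  have hpb : a * p + b = p := by
    have hge : p ≤ a * p + b := by
      by_contra hlt
      push_neg at hlt
      set t : ℝ := min (ε / 2) ((p - (a * p + b)) / (2 * a)) with ht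
      have ht0 : 0 < t := lt_min (by linarith) (div_pos (by linarith) (by linarith))
      have htε : t < ε := lt_of_le_of_lt (min_le_left _ _) (by linarith)
      have h1 := hab (p + t) ⟨by linarith, by linarith⟩
      have h2 : f p < f (p + t) := hmono (by linarith)
      rw [hp] at h2
      have h3 : a * t ≤ (p - (a * p + b)) / 2 := by
        have h4 := min_le_right (ε / 2) ((p - (a * p + b)) / (2 * a))
        calc a * t ≤ a * ((p - (a * p + b)) / (2 * a)) :=
              mul_le_mul_of_nonneg_left h4 (le_of_lt ha)
          _ = (p - (a * p + b)) / 2 := by field_simp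
      nlinarith [h1]
    have hle : a * p + b ≤ p := by
      by_contra hlt
      push_neg at hlt
      obtain ⟨q, hq⟩ := hbij.2 ((p + (a * p + b)) / 2)
      have hqp : p < q := by
        have : f p < f q := by rw [hp, hq]; linarith
        exact hmono.lt_iff_lt.1 this
      have hqlt : ∀ t : ℝ, 0 < t → t < ε → q < p + t := by
        intro t ht1 ht2
        have h1 := hab (p + t) ⟨by linarith, by linarith⟩
        have h2 : f q < f (p + t) := by rw [hq, h1]; nlinarith [mul_pos ha ht1]
        exact hmono.lt_iff_lt.1 h2
      have h5 := hqlt (min (ε / 2) (q - p)) (lt_min (by linarith) (by linarith))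
        (lt_of_le_of_lt (min_le_left _ _) (by linarith))
      have h6 := min_le_right (ε / 2) (q - p)
      linarith
    linarith
  refine ⟨ε, hε, a, ha, fun t ht1 ht2 => ?_⟩
  have h7 := hab (p + t) ⟨by linarith, by linarith⟩
  rw [h7]
  have : a * (p + t) + b = (a * p + b) + a * t := by ring
  rw [this, hpb]

/-- if both `f` and `h` fix `p`, then `f` is the identity just right of `p` -/
lemma id_right_of_fixed {f h : ℝ → ℝ} (hf : PLplusR f) (hh : PLplusR h)
    (hrev : ∀ x : ℝ, f (h (f x)) = h x) {p : ℝ} (hfp : f p = p) (hhp : h p = p) :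
    ∃ ε > 0, ∀ t : ℝ, 0 < t → t < ε → f (p + t) = p + t := by
  obtain ⟨εf, hεf, af, haf, hAf⟩ := right_germ hf hfp
  obtain ⟨εh, hεh, ah, hah, hAh⟩ := right_germ hh hhp
  set t : ℝ := min (min εf εh) (min (εh / af) (εf / (ah * af))) / 2 with htdef
  have ht0 : 0 < t := by
    have h1 : 0 < εh / af := by positivity
    have h2 : 0 < εf / (ah * af) := by positivity
    have := lt_min (lt_min hεf hεh) (lt_min h1 h2)
    positivity
  have htf : t < εf := by
    have h1 := min_le_left (min εf εh) (min (εh / af) (εf / (ah * af)))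
    have h2 := min_le_left εf εh
    linarith
  have hth : t < εh := by
    have h1 := min_le_left (min εf εh) (min (εh / af) (εf / (ah * af)))
    have h2 := min_le_right εf εh
    linarith
  have htfa : af * t < εh := by
    have h1 := min_le_right (min εf εh) (min (εh / af) (εf / (ah * af)))
    have h2 := min_le_left (εh / af) (εf / (ah * af))
    have h3 : t < εh / af := by linarith
    calc af * t < af * (εh / af) := by
          exact mul_lt_mul_of_pos_left h3 haf
      _ = εh := by field_simp
  have htha : ah * (af * t) < εf := by
    have h1 := min_le_right (min εf εh) (min (εh / af) (εf / (ah * af)))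
    have h2 := min_le_right (εh / af) (εf / (ah * af))
    have h3 : t < εf / (ah * af) := by linarith
    have h4 : (ah * af) * t < (ah * af) * (εf / (ah * af)) :=
      mul_lt_mul_of_pos_left h3 (by positivity)
    have h5 : (ah * af) * (εf / (ah * af)) = εf := by field_simp
    calc ah * (af * t) = (ah * af) * t := by ring
      _ < εf := by rw [← h5]; exact h4
  have e1 : f (p + t) = p + af * t := hAf t ht0 htf
  have e2 : h (p + af * t) = p + ah * (af * t) := hAh _ (by positivity) htfa
  have e3 : f (p + ah * (af * t)) = p + af * (ah * (af * t)) :=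
    hAf _ (by positivity) htha
  have e4 : h (p + t) = p + ah * t := hAh t ht0 hth
  have key := hrev (p + t)
  rw [e1, e2, e3, e4] at key
  have key2 : af * (ah * (af * t)) = ah * t := by linarith
  have h5 : (af * af - 1) * (ah * t) = 0 := by linear_combination key2
  have haf1 : af = 1 := by
    rcases mul_eq_zero.1 h5 with h6 | h6
    · have h7 : (af - 1) * (af + 1) = 0 := by linear_combination h6
      rcases mul_eq_zero.1 h7 with h8 | h8
      · linarith
      · linarith
    · exact absurd h6 (ne_of_gt (mul_pos hah ht0))
  refine ⟨εf, hεf, fun s hs1 hs2 => ?_⟩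
  have := hAf s hs1 hs2
  rw [haf1, one_mul] at this
  exact this

/-- main one-sided lemma: if `h` (and hence `f`) fixes `p`, then `f` is the
identity on `[p, ∞)` -/
lemma right_all {f h : ℝ → ℝ} (hf : PLplusR f) (hh : PLplusR h)
    (hrev : ∀ x : ℝ, f (h (f x)) = h x) {p : ℝ} (hfp : f p = p) (hhp : h p = p) :
    ∀ x, p ≤ x → f x = x := by
  by_contra hcon
  push_neg at hcon
  obtain ⟨x₀, hx₀p, hx₀⟩ := hcon
  set A : Set ℝ := {t | p ≤ t ∧ ∀ s, p ≤ s → s ≤ t → f s = s} with hA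
  have hpA : p ∈ A := ⟨le_refl p, fun s h1 h2 => by rw [le_antisymm h2 h1]; exact hfp⟩
  have hAbdd : BddAbove A := by
    refine ⟨x₀, fun t ht => ?_⟩
    by_contra hlt
    push_neg at hlt
    exact hx₀ (ht.2 x₀ hx₀p (le_of_lt hlt))
  set u := sSup A with hu
  have hpu : p ≤ u := le_csSup hAbdd hpA
  have hfix : ∀ s, p ≤ s → s < u → f s = s := by
    intro s h1 h2
    obtain ⟨t, htA, hst⟩ := exists_lt_of_lt_csSup ⟨p, hpA⟩ h2
    exact htA.2 s h1 (le_of_lt hst)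
  have hfu : f u = u := by
    have h1 : u ≤ f u := by
      apply le_of_forall_lt
      intro c hc
      rcases lt_or_ge c p with h | h
      · calc c < p := h
          _ = f p := hfp.symm
          _ ≤ f u := hf.2.1.le_iff_le.2 hpu
      · rw [← hfix c h hc]; exact hf.2.1 hc
    have h2 : f u ≤ u := by
      by_contra hlt
      push_neg at hlt
      obtain ⟨q, hq⟩ := hf.1.2 u
      have hqu : q < u := hf.2.1.lt_iff_lt.1 (by rw [hq]; exact hlt)
      have hqp : p ≤ q := hf.2.1.le_iff_le.1 (by rw [hq, hfp]; exact hpu)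
      have h3 := hfix q hqp hqu
      rw [h3] at hq
      exact absurd hq (ne_of_lt hqu)
    linarith
  obtain ⟨B, hBfin, haff⟩ := hf.2.2
  obtain ⟨ε₀, hε₀, hB⟩ := no_break_near hBfin u
  have hno : ∀ x ∈ Set.Ioo u (u + ε₀), x ∉ B := by
    intro x hx
    refine hB x (ne_of_gt hx.1) ?_
    rw [abs_of_pos (by linarith [hx.1])]
    linarith [hx.2]
  obtain ⟨a, b, hab⟩ := affine_on_Ioo haff (by linarith) hno
  have hnotid : ¬ ∀ x ∈ Set.Ioo u (u + ε₀), f x = x := by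
    intro hid
    have hmem : u + ε₀ / 2 ∈ A := by
      refine ⟨by linarith, fun s h1 h2 => ?_⟩
      rcases lt_or_ge s u with h3 | h3
      · exact hfix s h1 h3
      rcases eq_or_lt_of_le h3 with h4 | h4
      · rw [← h4]; exact hfu
      · exact hid s ⟨h4, by linarith⟩
    have := le_csSup hAbdd hmem
    linarith
  have hgap : ∃ ε' > 0, ∀ s, u < s → s < u + ε' → f s ≠ s := by
    push_neg at hnotid
    obtain ⟨x₁, hx₁, hfx₁⟩ := hnotid
    by_cases ha1 : a = 1
    · refine ⟨ε₀, hε₀, fun s h1 h2 hs => ?_⟩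
      have h3 := hab s ⟨h1, h2⟩
      have h4 := hab x₁ hx₁
      rw [ha1, one_mul] at h3 h4
      have hb : b = 0 := by rw [h3] at hs; linarith
      exact hfx₁ (by rw [h4, hb, add_zero])
    · set c : ℝ := b / (1 - a) with hc
      have h1a : (1 : ℝ) - a ≠ 0 := sub_ne_zero.2 (Ne.symm ha1)
      refine ⟨if u < c then min ε₀ (c - u) else ε₀, ?_, fun s h1 h2 hs => ?_⟩
      · split_ifs with hcu
        · exact lt_min hε₀ (by linarith)
        · exact hε₀
      · have hsε : s < u + ε₀ := by
          split_ifs at h2 with hcu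
          · exact lt_of_lt_of_le h2 (by linarith [min_le_left ε₀ (c - u)])
          · exact h2
        have h3 := hab s ⟨h1, hsε⟩
        have keyeq : a * s + b = s := by rw [← h3, hs]
        have hsc : s = c := by
          rw [hc]
          field_simp
          linear_combination -keyeq
        split_ifs at h2 with hcu
        · have h6 := min_le_right ε₀ (c - u)
          rw [hsc] at h2
          linarith
        · push_neg at hcu
          rw [hsc] at h1
          linarith
  obtain ⟨ε', hε', hgap'⟩ := hgap
  have hFinv : ∀ x, f x = x → f (h x) = h x := by
    intro x hx
    have h1 := hrev x
    rw [hx] at h1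
    exact h1
  have hFinv' : ∀ x, f (h x) = h x → f x = x := by
    intro x hx
    have h1 := hrev x
    have h2 : f (h (f x)) = f (h x) := by rw [h1, hx]
    exact hh.1.1 (hf.1.1 h2)
  have hhu : h u = u := by
    rcases lt_trichotomy (h u) u with hlt | heq | hgt
    · obtain ⟨q, hq⟩ := hh.1.2 u
      have hqu : u < q := hh.2.1.lt_iff_lt.1 (by rw [hq]; exact hlt)
      set s : ℝ := min (u + ε' / 2) ((u + q) / 2) with hs
      have hs1 : u < s := lt_min (by linarith) (by linarith)
      have hs2 : s < u + ε' := lt_of_le_of_lt (min_le_left _ _) (by linarith)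
      have hs3 : s < q := lt_of_le_of_lt (min_le_right _ _) (by linarith)
      have hhs_lt : h s < u := by rw [← hq]; exact hh.2.1 hs3
      have hhs_gt : p ≤ h s := by
        have h4 : h p < h s := hh.2.1 (by linarith)
        rw [hhp] at h4
        linarith
      have h5 : f (h s) = h s := hfix (h s) hhs_gt hhs_lt
      exact absurd (hFinv' s h5) (hgap' s hs1 hs2)
    · exact heq
    · set s : ℝ := min (u + ε' / 2) ((u + h u) / 2) with hs
      have hs1 : u < s := lt_min (by linarith) (by linarith)
      have hs2 : s < u + ε' := lt_of_le_of_lt (min_le_left _ _) (by linarith)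
      have hs3 : s < h u := lt_of_le_of_lt (min_le_right _ _) (by linarith)
      obtain ⟨w, hw⟩ := hh.1.2 s
      have hwu : w < u := hh.2.1.lt_iff_lt.1 (by rw [hw]; exact hs3)
      have hwp : p ≤ w := by
        have h4 : h p < h w := by rw [hhp, hw]; linarith
        exact le_of_lt (hh.2.1.lt_iff_lt.1 h4)
      have hfw : f w = w := hfix w hwp hwu
      have h5 := hFinv w hfw
      rw [hw] at h5
      exact absurd h5 (hgap' s hs1 hs2)
  obtain ⟨ε'', hε'', hid⟩ := id_right_of_fixed hf hh hrev hfu hhu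
  have hmin : 0 < min ε' ε'' / 2 := by positivity
  have h6 := hid (min ε' ε'' / 2) hmin
    (by linarith [min_le_right ε' ε''])
  exact hgap' (u + min ε' ε'' / 2) (by linarith)
    (by linarith [min_le_left ε' ε'']) h6

lemma PLplusR.neg_conj {f : ℝ → ℝ} (hf : PLplusR f) :
    PLplusR (fun x => -f (-x)) := by
  obtain ⟨⟨hinj, hsurj⟩, hmono, B, hBfin, haff⟩ := hf
  refine ⟨⟨?_, ?_⟩, ?_, ⟨(fun x : ℝ => -x) '' B, ?_, ?_⟩⟩
  · intro x y hxy
    simp only at hxy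
    have := hinj (neg_injective hxy)
    linarith [this]
  · intro y
    obtain ⟨z, hz⟩ := hsurj (-y)
    exact ⟨-z, by simp [hz]⟩
  · intro x y hxy
    simp only
    have := hmono (neg_lt_neg hxy)
    linarith
  · intro r
    apply Set.Finite.subset ((hBfin r).image (fun x : ℝ => -x))
    rintro x ⟨⟨y, hy, rfl⟩, hx2⟩
    refine ⟨y, ⟨hy, ?_⟩, rfl⟩
    obtain ⟨h1, h2⟩ := hx2
    have h1' : -r ≤ -y := h1
    have h2' : -y ≤ r := h2
    constructor <;> linarith
  · intro x hx
    have hnx : -x ∉ B := by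
      intro hmem
      exact hx ⟨-x, hmem, by ring⟩
    obtain ⟨a, b, hev⟩ := haff (-x) hnx
    refine ⟨a, -b, ?_⟩
    have htend : Filter.Tendsto (fun y : ℝ => -y) (nhds x) (nhds (-x)) :=
      (continuous_neg.tendsto x)
    filter_upwards [htend.eventually hev] with y hy
    show -f (-y) = a * y + -b
    rw [hy]
    ring

/-- Let `f, h ∈ PL⁺(ℝ)` with `h f h⁻¹ = f⁻¹` (equivalently `f ∘ h ∘ f = h`) and
`f ≠ id`.  Then `f` has a fixed point and `h` has no fixed point. -/
theorem reversible_PLplusR_fixed_points (f h : ℝ → ℝ)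
    (hf : PLplusR f) (hh : PLplusR h)
    (hrev : ∀ x : ℝ, f (h (f x)) = h x)
    (hne : ∃ x : ℝ, f x ≠ x) :
    (∃ x : ℝ, f x = x) ∧ ∀ x : ℝ, h x ≠ x := by
  constructor
  · by_contra hnex
    push_neg at hnex
    have hcont : Continuous f := hf.continuous
    have hc2 : Continuous (fun x => f x - x) := hcont.sub continuous_id
    have hsign : (∀ x, x < f x) ∨ (∀ x, f x < x) := by
      rcases lt_or_gt_of_ne (hnex 0) with h0 | h0
      · right
        intro x
        rcases lt_or_ge (f x) x with hx | hx
        · exact hx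
        exfalso
        have hx' : x < f x := lt_of_le_of_ne hx (Ne.symm (hnex x))
        have hmem : (0 : ℝ) ∈ Set.uIcc ((fun t => f t - t) 0) ((fun t => f t - t) x) :=
          Set.mem_uIcc.2 (Or.inl ⟨by simpa using le_of_lt h0, by simp; linarith⟩)
        obtain ⟨c, _, hc⟩ := intermediate_value_uIcc hc2.continuousOn hmem
        exact hnex c (by simp at hc; linarith)
      · left
        intro x
        rcases lt_or_ge x (f x) with hx | hx
        · exact hx
        exfalso
        have hx' : f x < x := lt_of_le_of_ne hx (hnex x)
        have hmem : (0 : ℝ) ∈ Set.uIcc ((fun t => f t - t) 0) ((fun t => f t - t) x) :=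
          Set.mem_uIcc.2 (Or.inr ⟨by simp; linarith, by simpa using le_of_lt h0⟩)
        obtain ⟨c, _, hc⟩ := intermediate_value_uIcc hc2.continuousOn hmem
        exact hnex c (by simp at hc; linarith)
    rcases hsign with hpos | hneg
    · have h1 := hrev 0
      have h2 : h 0 < h (f 0) := hh.2.1 (hpos 0)
      have h3 : h (f 0) < f (h (f 0)) := hpos _
      rw [h1] at h3
      linarith
    · have h1 := hrev 0
      have h2 : h (f 0) < h 0 := hh.2.1 (hneg 0)
      have h3 : f (h (f 0)) < h (f 0) := hneg _
      rw [h1] at h3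
      linarith
  · intro x hx
    have hfx : f x = x := by
      rcases lt_trichotomy (f x) x with hlt | heq | hgt
      · exfalso
        have h1 := hrev x
        rw [hx] at h1
        have h2 : h (f x) < x := by have := hh.2.1 hlt; rwa [hx] at this
        have h3 : f x < f (h (f x)) := by rw [h1]; exact hlt
        have h4 := hf.2.1.lt_iff_lt.1 h3
        linarith
      · exact heq
      · exfalso
        have h1 := hrev x
        rw [hx] at h1
        have h2 : x < h (f x) := by have := hh.2.1 hgt; rwa [hx] at this
        have h3 : f (h (f x)) < f x := by rw [h1]; exact hgt
        have h4 := hf.2.1.lt_iff_lt.1 h3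
        linarith
    obtain ⟨x₀, hx₀⟩ := hne
    have hR := right_all hf hh hrev hfx hx
    have hfm := hf.neg_conj
    have hhm := hh.neg_conj
    have hrevm : ∀ y : ℝ, (fun x => -f (-x)) ((fun x => -h (-x)) ((fun x => -f (-x)) y))
        = (fun x => -h (-x)) y := by
      intro y
      simp only [neg_neg]
      rw [hrev (-y)]
    have hfpm : (fun x => -f (-x)) (-x) = -x := by
      simp only [neg_neg]
      rw [hfx]
    have hhpm : (fun x => -h (-x)) (-x) = -x := by
      simp only [neg_neg]
      rw [hx]
    have hL := right_all hfm hhm hrevm hfpm hhpm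
    rcases le_or_gt x x₀ with hc | hc
    · exact hx₀ (hR x₀ hc)
    · have h9 := hL (-x₀) (by linarith)
      simp only [neg_neg] at h9
      exact hx₀ (by linarith)
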